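/- Let G be a simple undirected graph on n vertices. Then the total irregularity of G satisfies irr_t(G) ≤ (1/12)(2n^3 − 3n^2 − 2n + 3) if n is odd, and irr_t(G) ≤ (1/12)(2n^3 − 3n^2 − 2n) if n is even. -/
import Mathlib

open scoped Classical

/-- The total irregularity of a graph: half the sum, over all unordered pairs of
distinct vertices, of the absolute difference of their degrees. -/
noncomputable def irrt {V : Type*} [Fintype V] (G : SimpleGraph V) : ℝ :=
  (1 / 2) * ∑ e ∈ Finset.univ.filter (fun e : Sym2 V => ¬ e.IsDiag),
    Sym2.lift ⟨fun u v => |(G.degree u : ℝ) - (G.degree v : ℝ)|,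
      fun _ _ => abs_sub_comm _ _⟩ e

section aux
variable {V : Type*} [Fintype V]

lemma half_sum' [LinearOrder V] (f : V → V → ℤ) (hf : ∀ a b, f a b = f b a) :
    2 * ∑ i ∈ Finset.univ.offDiag with i.1 < i.2, f i.1 i.2
      = ∑ i ∈ (Finset.univ : Finset V).offDiag, f i.1 i.2 := by
  classical
  rw [two_mul]
  rw [← Finset.sum_filter_add_sum_filter_not Finset.univ.offDiag
    (fun i => i.1 < i.2) (fun i => f i.1 i.2)]
  congr 1
  refine Finset.sum_nbij' (i := Prod.swap) (j := Prod.swap) ?_ ?_ ?_ ?_ ?_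
  · rintro ⟨a, b⟩ hab
    simp only [Finset.mem_filter, Finset.mem_offDiag, Prod.swap] at hab ⊢
    exact ⟨⟨hab.1.2.1, hab.1.1, (ne_of_lt hab.2).symm⟩, not_lt_of_gt hab.2⟩
  · rintro ⟨a, b⟩ hab
    simp only [Finset.mem_filter, Finset.mem_offDiag, Prod.swap] at hab ⊢
    exact ⟨⟨hab.1.2.1, hab.1.1, (hab.1.2.2).symm⟩,
      lt_of_le_of_ne (not_lt.mp hab.2) hab.1.2.2.symm⟩
  · intro a _; rfl
  · intro a _; rfl
  · rintro ⟨a, b⟩ _; exact hf a b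

lemma sum_offDiag_eq' [DecidableEq V] (g : V → V → ℤ) :
    ∑ i ∈ (Finset.univ : Finset V).offDiag, g i.1 i.2
      = (∑ a, ∑ b, g a b) - ∑ a, g a a := by
  have h : (Finset.univ : Finset V).offDiag
      = (Finset.univ ×ˢ Finset.univ).filter (fun p => p.1 ≠ p.2) := by
    ext ⟨a, b⟩; simp
  have h2 := Finset.sum_filter_add_sum_filter_not (Finset.univ ×ˢ Finset.univ)
    (fun p : V × V => p.1 ≠ p.2) (fun i => g i.1 i.2)
  have h3 : ∑ i ∈ (Finset.univ ×ˢ Finset.univ).filter (fun p : V × V => ¬ p.1 ≠ p.2),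
      g i.1 i.2 = ∑ a, g a a := by
    refine Finset.sum_nbij' (i := Prod.fst) (j := fun a => (a, a)) ?_ ?_ ?_ ?_ ?_
    · rintro ⟨a, b⟩ _; exact Finset.mem_univ a
    · intro a _; simp
    · rintro ⟨a, b⟩ hab
      simp only [Finset.mem_filter, not_not] at hab
      simp [hab.2]
    · intro a _; rfl
    · rintro ⟨a, b⟩ hab
      simp only [Finset.mem_filter, not_not] at hab
      rw [hab.2]
  rw [h, eq_sub_iff_add_eq, ← h3, h2, Finset.sum_product]

lemma offDiag_add_sum [DecidableEq V] (D : V → ℤ) :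
    ∑ i ∈ (Finset.univ : Finset V).offDiag, (D i.1 + D i.2)
      = 2 * (Fintype.card V : ℤ) * (∑ v, D v) - 2 * (∑ v, D v) := by
  rw [sum_offDiag_eq' (fun a b => D a + D b)]
  have h1 : ∀ a : V, ∑ b : V, (D a + D b) = (Fintype.card V : ℤ) * D a + ∑ v, D v := by
    intro a
    rw [Finset.sum_add_distrib, Finset.sum_const, Finset.card_univ, nsmul_eq_mul]
  rw [Finset.sum_congr rfl (fun a _ => h1 a), Finset.sum_add_distrib, Finset.sum_const,
    Finset.card_univ, nsmul_eq_mul, ← Finset.mul_sum]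
  have h2 : ∑ a : V, (D a + D a) = 2 * ∑ v, D v := by
    rw [Finset.sum_add_distrib]; ring
  rw [h2]
  ring

lemma prod_sum_eq [DecidableEq V] (D : V → ℤ) (M : ℤ) :
    ∑ i ∈ Finset.univ ×ˢ Finset.univ, (D i.1 * (M - D i.2) + D i.2 * (M - D i.1))
      = 2 * (∑ v, D v) * ((Fintype.card V : ℤ) * M - ∑ v, D v) := by
  rw [Finset.sum_product]
  have h1 : ∀ a : V, ∑ b : V, (D a * (M - D b) + D b * (M - D a))
      = (Fintype.card V : ℤ) * (M * D a) + M * (∑ v, D v) - 2 * (D a * (∑ v, D v)) := by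
    intro a
    rw [Finset.sum_congr rfl
      (fun b _ => show D a * (M - D b) + D b * (M - D a)
        = (M * D a + M * D b) - 2 * (D a * D b) from by ring)]
    simp only [Finset.sum_sub_distrib, Finset.sum_add_distrib, Finset.sum_const,
      Finset.card_univ, nsmul_eq_mul, ← Finset.sum_mul, ← Finset.mul_sum]
    try ring
  rw [Finset.sum_congr rfl (fun a _ => h1 a)]
  simp only [Finset.sum_sub_distrib, Finset.sum_add_distrib, Finset.sum_const,
    Finset.card_univ, nsmul_eq_mul, ← Finset.sum_mul, ← Finset.mul_sum]
  try ring
end aux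

theorem stmt4 {V : Type*} [Fintype V] (G : SimpleGraph V) (n : ℕ)
    (hn : n = Fintype.card V) :
    (Odd n → irrt G ≤ (1 / 12 : ℝ) * (2 * (n : ℝ) ^ 3 - 3 * (n : ℝ) ^ 2 - 2 * n + 3)) ∧
    (Even n → irrt G ≤ (1 / 12 : ℝ) * (2 * (n : ℝ) ^ 3 - 3 * (n : ℝ) ^ 2 - 2 * n)) := by
  classical
  letI : LinearOrder V := LinearOrder.lift' (Fintype.equivFin V) (Fintype.equivFin V).injective
  set D : V → ℤ := fun v => (G.degree v : ℤ) with hD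
  set S : ℤ := ∑ v, D v with hSdef
  set T : ℤ := ∑ i ∈ Finset.univ.offDiag with i.1 < i.2, |D i.1 - D i.2| with hTdef
  have habs : ∀ a b : V, |D a - D b| = |D b - D a| := fun a b => abs_sub_comm _ _
  -- irrt equals (1/2) T
  have hirrt : irrt G = (1 / 2 : ℝ) * (T : ℝ) := by
    have hlift := Finset.sum_sym2_filter_not_isDiag (Finset.univ : Finset V)
      (fun e => Sym2.lift ⟨fun u v => |(G.degree u : ℝ) - (G.degree v : ℝ)|,
        fun _ _ => abs_sub_comm _ _⟩ e)
    rw [Finset.sym2_univ] at hlift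
    unfold irrt
    have hsets := Finset.filter_congr_decidable (α := Sym2 V) Finset.univ
      (fun e => ¬ e.IsDiag)
      (fun a => @instDecidableNot _
        (@Sym2.IsDiag.decidablePred V (fun a b => Classical.propDecidable (a = b)) a))
    rw [hsets, hlift]
    congr 1
    rw [hTdef]
    simp only [hD]
    push_cast
    refine Finset.sum_congr rfl ?_
    rintro ⟨a, b⟩ _
    simp
  -- S is even
  have hSeven : Even S := by
    have h := SimpleGraph.sum_degrees_eq_twice_card_edges G
    refine ⟨(G.edgeFinset.card : ℤ), ?_⟩
    rw [hSdef]
    simp only [hD]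
    rw [← Nat.cast_sum, h]
    push_cast
    ring
  -- T is even
  have hTeven : Even T := by
    have hU2 : 2 * (∑ i ∈ Finset.univ.offDiag with i.1 < i.2, (D i.1 + D i.2))
        = 2 * (Fintype.card V : ℤ) * S - 2 * S := by
      rw [half_sum' (fun a b => D a + D b) (fun a b => by ring), offDiag_add_sum, hSdef]
    have hUeven : Even (∑ i ∈ Finset.univ.offDiag with i.1 < i.2, (D i.1 + D i.2)) := by
      obtain ⟨s, hs⟩ := hSeven
      refine ⟨(Fintype.card V : ℤ) * s - s, ?_⟩
      have h' : 2 * (∑ i ∈ Finset.univ.offDiag with i.1 < i.2, (D i.1 + D i.2))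
          = 2 * ((Fintype.card V : ℤ) * s - s + ((Fintype.card V : ℤ) * s - s)) := by
        rw [hU2, hs]; ring
      exact mul_left_cancel₀ two_ne_zero h'
    have hsum : Even (T + ∑ i ∈ Finset.univ.offDiag with i.1 < i.2, (D i.1 + D i.2)) := by
      rw [hTdef, ← Finset.sum_add_distrib]
      apply Finset.even_sum
      rintro ⟨a, b⟩ _
      rcases abs_cases (D a - D b) with ⟨h, _⟩ | ⟨h, _⟩ <;> rw [h]
      · exact ⟨D a, by ring⟩
      · exact ⟨D b, by ring⟩
    obtain ⟨u, hu⟩ := hUeven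
    obtain ⟨w, hw⟩ := hsum
    exact ⟨w - u, by omega⟩
  have hT0 : 0 ≤ T := Finset.sum_nonneg fun i _ => abs_nonneg _
  -- key bound
  have key : 4 * T ≤ (n : ℤ) ^ 2 * ((n : ℤ) - 1) := by
    rcases le_or_gt n 1 with h1 | h2
    · have hsub : Subsingleton V := by
        rw [← Fintype.card_le_one_iff_subsingleton, ← hn]; exact h1
      have hempty : (Finset.univ : Finset V).offDiag = ∅ := by
        ext ⟨a, b⟩
        simp only [Finset.mem_offDiag, Finset.notMem_empty, iff_false, not_and]
        intro _ _
        simp [Subsingleton.elim a b]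
      have hT0' : T = 0 := by rw [hTdef, hempty]; simp
      rw [hT0']
      interval_cases n <;> norm_num
    · have hn2 : (2 : ℤ) ≤ (n : ℤ) := by exact_mod_cast h2
      set M : ℤ := (n : ℤ) - 1 with hM
      have hM1 : 1 ≤ M := by omega
      have hD0 : ∀ v, 0 ≤ D v := fun v => Int.natCast_nonneg _
      have hDle : ∀ v, D v ≤ M := by
        intro v
        have h := G.degree_lt_card_verts v
        have h2' : (G.degree v : ℤ) < (Fintype.card V : ℤ) := by exact_mod_cast h
        have h3' : D v = (G.degree v : ℤ) := rfl
        rw [← hn] at h2'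
        omega
      have h2T : 2 * T = ∑ i ∈ (Finset.univ : Finset V).offDiag, |D i.1 - D i.2| := by
        rw [hTdef]; exact half_sum' _ habs
      have hOffFilter : (Finset.univ : Finset V).offDiag
          = (Finset.univ ×ˢ Finset.univ).filter (fun p => p.1 ≠ p.2) := by
        ext ⟨a, b⟩; simp
      have step : M * (2 * T) ≤ 2 * S * ((n : ℤ) * M - S) := by
        rw [h2T, Finset.mul_sum]
        calc ∑ i ∈ (Finset.univ : Finset V).offDiag, M * |D i.1 - D i.2|
            ≤ ∑ i ∈ (Finset.univ : Finset V).offDiag,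
                (D i.1 * (M - D i.2) + D i.2 * (M - D i.1)) := by
              refine Finset.sum_le_sum ?_
              rintro ⟨a, b⟩ _
              rcases abs_cases (D a - D b) with ⟨h, _⟩ | ⟨h, _⟩ <;> rw [h] <;>
                nlinarith [hD0 a, hD0 b, hDle a, hDle b]
          _ ≤ ∑ i ∈ Finset.univ ×ˢ Finset.univ,
                (D i.1 * (M - D i.2) + D i.2 * (M - D i.1)) := by
              refine Finset.sum_le_sum_of_subset_of_nonneg ?_ ?_
              · rw [hOffFilter]; exact Finset.filter_subset _ _
              · rintro ⟨a, b⟩ _ _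
                have := hD0 a; have := hD0 b; have := hDle a; have := hDle b
                nlinarith
          _ = 2 * S * ((n : ℤ) * M - S) := by
              rw [prod_sum_eq, ← hSdef, ← hn]
      have hsq : 2 * (2 * S * ((n : ℤ) * M - S)) ≤ ((n : ℤ) ^ 2 * M) * M := by
        nlinarith [sq_nonneg ((n : ℤ) * M - 2 * S)]
      have hfin : (4 * T) * M ≤ ((n : ℤ) ^ 2 * M) * M := by nlinarith
      have := le_of_mul_le_mul_right hfin (by omega : (0 : ℤ) < M)
      rw [hM] at this
      exact this
  -- finish
  obtain ⟨t, ht⟩ := hTeven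
  have ht0 : 0 ≤ t := by omega
  have hkey : 8 * t ≤ (n : ℤ) ^ 2 * ((n : ℤ) - 1) := by
    calc (8 : ℤ) * t = 4 * T := by omega
      _ ≤ _ := key
  constructor
  · intro hodd
    obtain ⟨k, hk⟩ := hodd
    have hfin : 12 * t ≤ 2 * (n : ℤ) ^ 3 - 3 * (n : ℤ) ^ 2 - 2 * (n : ℤ) + 3 := by
      rcases lt_or_ge n 5 with h | h
      · interval_cases n <;> norm_num at hkey ⊢ <;> omega
      · have h5 : (5 : ℤ) ≤ (n : ℤ) := by exact_mod_cast h
        nlinarith [hkey, ht0, mul_nonneg (sub_nonneg.2 h5) (sq_nonneg (n : ℤ)),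
          sq_nonneg ((n : ℤ) - 1)]
    rw [hirrt, ht]
    have h12 : ((12 * t : ℤ) : ℝ)
        ≤ ((2 * (n : ℤ) ^ 3 - 3 * (n : ℤ) ^ 2 - 2 * (n : ℤ) + 3 : ℤ) : ℝ) := by
      exact_mod_cast hfin
    push_cast at h12 ⊢
    linarith
  · intro heven
    obtain ⟨k, hk⟩ := heven
    have hfin : 12 * t ≤ 2 * (n : ℤ) ^ 3 - 3 * (n : ℤ) ^ 2 - 2 * (n : ℤ) := by
      rcases lt_or_ge n 4 with h | h
      · interval_cases n <;> norm_num at hkey ⊢ <;> omega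
      · have h4 : (4 : ℤ) ≤ (n : ℤ) := by exact_mod_cast h
        nlinarith [hkey, ht0, mul_nonneg (mul_nonneg (by positivity : (0:ℤ) ≤ (n:ℤ))
          (by linarith : (0:ℤ) ≤ (n:ℤ) - 4)) (by positivity : (0:ℤ) ≤ (n:ℤ) + 1)]
    rw [hirrt, ht]
    have h12 : ((12 * t : ℤ) : ℝ)
        ≤ ((2 * (n : ℤ) ^ 3 - 3 * (n : ℤ) ^ 2 - 2 * (n : ℤ) : ℤ) : ℝ) := by
      exact_mod_cast hfin
    push_cast at h12 ⊢
    linarith
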